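/- Let a>0 and let γ:[−a,∞)→ℝ be continuous, and define Φ(x)=exp(−2∫₀ˣ γ(u)du) for x≥−a. Suppose that for every δ∈(0,a] there exists a constant Λ(δ)>0 such that ∫₀^ξ Φ(u)/(∫_{u−δ}^{u} Φ(s)ds) du = Λ(δ)·ξ for all ξ≥0. Then γ is constant on [−a,∞). -/

import Mathlib

open MeasureTheory Set Filter Topology intervalIntegral

theorem stmt_0 (a : ℝ) (ha : 0 < a) (γ : ℝ → ℝ)
    (hγ : ContinuousOn γ (Set.Ici (-a)))
    (Φ : ℝ → ℝ)
    (hΦ : ∀ x, Φ x = Real.exp (-2 * ∫ u in (0:ℝ)..x, γ u))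
    (hexp : ∀ δ ∈ Set.Ioc (0:ℝ) a, ∃ Λ > (0:ℝ), ∀ ξ ≥ (0:ℝ),
      (∫ u in (0:ℝ)..ξ, Φ u / (∫ s in (u - δ)..u, Φ s)) = Λ * ξ) :
    ∀ x ∈ Set.Ici (-a), ∀ y ∈ Set.Ici (-a), γ x = γ y := by
  have hΦf : Φ = fun x => Real.exp (-2 * ∫ u in (0:ℝ)..x, γ u) := funext hΦ
  subst hΦf
  set G : ℝ → ℝ := (fun x => ∫ u in (0:ℝ)..x, γ u) with hGdef
  set Φ : ℝ → ℝ := (fun x => Real.exp (-2 * G x)) with hΦdef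
  have hΦpos : ∀ x, 0 < Φ x := fun x => Real.exp_pos _
  have hγint : ∀ p q : ℝ, -a ≤ p → -a ≤ q → IntervalIntegrable γ volume p q := by
    intro p q hp hq
    exact ((hγ.mono (fun x hx => le_trans (le_inf hp hq) hx.1))).intervalIntegrable
  have hγderiv : ∀ x, -a < x → HasDerivAt G (γ x) x := by
    intro x hx
    exact integral_hasDerivAt_right (hγint 0 x (by linarith) hx.le)
      (ContinuousOn.stronglyMeasurableAtFilter isOpen_Ioi (hγ.mono Ioi_subset_Ici_self) x hx)
      (hγ.continuousAt (Ici_mem_nhds hx))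
  have hGcont : ContinuousOn G (Ici (-a)) := by
    intro x hx
    have hb : -a ≤ max x 0 + 1 := by
      have : (0:ℝ) ≤ max x 0 := le_max_right _ _
      linarith
    have h0 : (0:ℝ) ∈ uIcc (-a) (max x 0 + 1) := by
      rw [mem_uIcc]
      left
      exact ⟨by linarith, by have : (0:ℝ) ≤ max x 0 := le_max_right _ _; linarith⟩
    have hcc := continuousOn_primitive_interval' (hγint (-a) (max x 0 + 1) le_rfl hb) h0
    have hxmem : x ∈ uIcc (-a) (max x 0 + 1) := by
      rw [mem_uIcc]
      left
      exact ⟨hx, by have := le_max_left x 0; linarith⟩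
    refine (hcc x hxmem).mono_of_mem_nhdsWithin ?_
    have he : uIcc (-a) (max x 0 + 1) = Icc (-a) (max x 0 + 1) := uIcc_of_le (by linarith)
    rw [he, mem_nhdsWithin_iff_exists_mem_nhds_inter]
    refine ⟨Iio (max x 0 + 1), Iio_mem_nhds (by have := le_max_left x 0; linarith), ?_⟩
    rintro y ⟨hy1, hy2⟩
    exact ⟨hy2, le_of_lt hy1⟩
  have hΦcont : ContinuousOn Φ (Ici (-a)) :=
    Real.continuous_exp.comp_continuousOn (continuousOn_const.mul hGcont)
  have hΦat : ∀ x, -a < x → ContinuousAt Φ x := fun x hx =>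
    hΦcont.continuousAt (Ici_mem_nhds hx)
  have hΦint : ∀ p q : ℝ, -a ≤ p → -a ≤ q → IntervalIntegrable Φ volume p q := by
    intro p q hp hq
    exact ((hΦcont.mono (fun x hx => le_trans (le_inf hp hq) hx.1))).intervalIntegrable
  set K : ℝ → ℝ := (fun x => ∫ s in (0:ℝ)..x, Φ s) with hKdef
  have hKderiv : ∀ x, -a < x → HasDerivAt K (Φ x) x := by
    intro x hx
    exact integral_hasDerivAt_right (hΦint 0 x (by linarith) hx.le)
      (ContinuousOn.stronglyMeasurableAtFilter isOpen_Ioi (hΦcont.mono Ioi_subset_Ici_self) x hx)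
      (hΦat x hx)
  have hKcont : ContinuousOn K (Ici (-a)) := by
    intro x hx
    have hb : -a ≤ max x 0 + 1 := by
      have : (0:ℝ) ≤ max x 0 := le_max_right _ _
      linarith
    have h0 : (0:ℝ) ∈ uIcc (-a) (max x 0 + 1) := by
      rw [mem_uIcc]
      left
      exact ⟨by linarith, by have : (0:ℝ) ≤ max x 0 := le_max_right _ _; linarith⟩
    have hcc := continuousOn_primitive_interval' (hΦint (-a) (max x 0 + 1) le_rfl hb) h0
    have hxmem : x ∈ uIcc (-a) (max x 0 + 1) := by
      rw [mem_uIcc]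
      left
      exact ⟨hx, by have := le_max_left x 0; linarith⟩
    refine (hcc x hxmem).mono_of_mem_nhdsWithin ?_
    have he : uIcc (-a) (max x 0 + 1) = Icc (-a) (max x 0 + 1) := uIcc_of_le (by linarith)
    rw [he, mem_nhdsWithin_iff_exists_mem_nhds_inter]
    refine ⟨Iio (max x 0 + 1), Iio_mem_nhds (by have := le_max_left x 0; linarith), ?_⟩
    rintro y ⟨hy1, hy2⟩
    exact ⟨hy2, le_of_lt hy1⟩
  set D : ℝ → ℝ → ℝ := (fun δ u => ∫ s in (u - δ)..u, Φ s) with hDdef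
  have hD : ∀ δ u : ℝ, -a ≤ u - δ → -a ≤ u → D δ u = K u - K (u - δ) := by
    intro δ u h1 h2
    exact (integral_interval_sub_left (hΦint 0 u (by linarith) h2)
      (hΦint 0 (u - δ) (by linarith) h1)).symm
  have hDpos : ∀ δ u : ℝ, 0 < δ → -a ≤ u - δ → 0 < D δ u := by
    intro δ u h1 h2
    exact intervalIntegral_pos_of_pos (hΦint (u - δ) u h2 (by linarith)) hΦpos (by linarith)
  -- Step 1: Λ-free consequence of the exponential-law hypothesis
  have key : ∀ δ ∈ Ioc (0:ℝ) a, ∀ u > (0:ℝ), Φ u * D δ 1 = Φ 1 * D δ u := by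
    intro δ hδ
    obtain ⟨hδ0, hδa⟩ := hδ
    obtain ⟨Λ, hΛpos, hEq⟩ := hexp δ ⟨hδ0, hδa⟩
    have claim : ∀ u > (0:ℝ), Φ u = Λ * D δ u := by
      intro u hu
      set g : ℝ → ℝ := (fun v => Φ v / D δ v) with hgdef
      have hgCA : ∀ v, 0 < v → ContinuousAt g v := by
        intro v hv
        have hva : -a < v := by linarith
        have hvd : -a < v - δ := by linarith
        have hDC : ContinuousAt (fun w => D δ w) v := by
          have hKC : ContinuousAt (fun w => K w - K (w - δ)) v := by
            have hc : HasDerivAt (fun w : ℝ => K (w - δ)) (Φ (v - δ)) v := by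
              have hc' := (hKderiv (v - δ) hvd).comp v ((hasDerivAt_id v).sub_const δ)
              simpa [Function.comp_def] using hc'
            exact ((hKderiv v hva).continuousAt).sub hc.continuousAt
          refine hKC.congr ?_
          filter_upwards [Ioi_mem_nhds (show δ - a < v by linarith)] with w hw
          rw [mem_Ioi] at hw
          exact (hD δ w (by linarith) (by linarith)).symm
        exact (hΦat v hva).div hDC (ne_of_gt (hDpos δ v hδ0 (by linarith)))
      have hDcontOn : ContinuousOn (fun w => D δ w) (Icc 0 u) := by
        have hKC : ContinuousOn (fun w => K w - K (w - δ)) (Icc 0 u) := by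
          refine ContinuousOn.sub (hKcont.mono ?_) ?_
          · intro w hw; exact le_trans (by linarith) hw.1
          · refine hKcont.comp ((continuous_id.sub continuous_const).continuousOn) ?_
            intro w hw
            have := hw.1
            simp only [mem_Ici, id]
            simp only [mem_Icc] at hw
            linarith [hw.1]
        refine hKC.congr ?_
        intro w hw
        simp only [mem_Icc] at hw
        exact hD δ w (by linarith [hw.1]) (by linarith [hw.1])
      have hgcontOn : ContinuousOn g (Icc 0 u) := by
        refine (hΦcont.mono ?_).div hDcontOn ?_
        · intro w hw
          simp only [mem_Icc] at hw
          simp only [mem_Ici]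
          linarith [hw.1]
        · intro w hw
          simp only [mem_Icc] at hw
          exact ne_of_gt (hDpos δ w hδ0 (by linarith [hw.1]))
      have hgint : IntervalIntegrable g volume 0 u := by
        have he : uIcc (0:ℝ) u = Icc 0 u := uIcc_of_le hu.le
        exact (he ▸ hgcontOn).intervalIntegrable
      have hH1 : HasDerivAt (fun ξ => ∫ v in (0:ℝ)..ξ, g v) (g u) u :=
        integral_hasDerivAt_right hgint
          (ContinuousAt.stronglyMeasurableAtFilter isOpen_Ioi (fun v hv => hgCA v hv) u hu)
          (hgCA u hu)
      have hH2 : HasDerivAt (fun ξ => ∫ v in (0:ℝ)..ξ, g v) Λ u := by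
        have hder : HasDerivAt (fun ξ : ℝ => Λ * ξ) Λ u := by
          simpa using (hasDerivAt_id u).const_mul Λ
        refine hder.congr_of_eventuallyEq ?_
        filter_upwards [Ioi_mem_nhds hu] with ξ hξ
        rw [mem_Ioi] at hξ
        exact hEq ξ hξ.le
      have hgΛ : g u = Λ := hH1.unique hH2
      have hDne : D δ u ≠ 0 := ne_of_gt (hDpos δ u hδ0 (by linarith))
      have : Φ u / D δ u = Λ := hgΛ
      rw [div_eq_iff hDne] at this
      exact this
    intro u hu
    rw [claim u hu, claim 1 one_pos]
    ring
  -- Step 2: differentiate in δ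
  have key2 : ∀ u > (0:ℝ), ∀ δ ∈ Ioo (0:ℝ) a, Φ u * Φ (1 - δ) = Φ 1 * Φ (u - δ) := by
    intro u hu δ hδ
    obtain ⟨hδ0, hδa⟩ := hδ
    have h12 : (fun d => Φ u * (K 1 - K (1 - d))) =ᶠ[𝓝 δ] (fun d => Φ 1 * (K u - K (u - d))) := by
      filter_upwards [Ioo_mem_nhds hδ0 hδa] with d hd
      obtain ⟨hd0, hda⟩ := hd
      have e1 : K 1 - K (1 - d) = D d 1 := (hD d 1 (by linarith) (by linarith)).symm
      have e2 : K u - K (u - d) = D d u := (hD d u (by linarith) (by linarith)).symm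
      rw [e1, e2]
      exact key d ⟨hd0, hda.le⟩ u hu
    have hd1 : HasDerivAt (fun d => Φ u * (K 1 - K (1 - d))) (Φ u * Φ (1 - δ)) δ := by
      have hK1 : HasDerivAt (fun d : ℝ => K (1 - d)) (-Φ (1 - δ)) δ := by
        have hc := (hKderiv (1 - δ) (by linarith)).comp δ ((hasDerivAt_id δ).const_sub 1)
        simpa [Function.comp_def] using hc
      have := ((hasDerivAt_const δ (K 1)).sub hK1).const_mul (Φ u)
      simpa using this
    have hd2 : HasDerivAt (fun d => Φ 1 * (K u - K (u - d))) (Φ 1 * Φ (u - δ)) δ := by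
      have hKu : HasDerivAt (fun d : ℝ => K (u - d)) (-Φ (u - δ)) δ := by
        have hc := (hKderiv (u - δ) (by linarith)).comp δ ((hasDerivAt_id δ).const_sub u)
        simpa [Function.comp_def] using hc
      have := ((hasDerivAt_const δ (K u)).sub hKu).const_mul (Φ 1)
      simpa using this
    exact hd1.unique (hd2.congr_of_eventuallyEq h12)
  -- Step 3: take logs
  have key3 : ∀ u > (0:ℝ), ∀ δ ∈ Ioo (0:ℝ) a, G u + G (1 - δ) = G 1 + G (u - δ) := by
    intro u hu δ hδ
    have h := key2 u hu δ hδ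
    simp only [hΦdef, ← Real.exp_add] at h
    have h2 := Real.exp_eq_exp.mp h
    linarith
  -- Step 4: differentiate in u
  have key4 : ∀ δ ∈ Ioo (0:ℝ) a, ∀ u > (0:ℝ), γ (u - δ) = γ u := by
    intro δ hδ u hu
    obtain ⟨hδ0, hδa⟩ := hδ
    have h12 : (fun v => G v + G (1 - δ)) =ᶠ[𝓝 u] (fun v => G 1 + G (v - δ)) := by
      filter_upwards [Ioi_mem_nhds hu] with v hv
      rw [mem_Ioi] at hv
      exact key3 v hv δ ⟨hδ0, hδa⟩
    have hd1 : HasDerivAt (fun v => G v + G (1 - δ)) (γ u) u := by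
      simpa using (hγderiv u (by linarith)).add_const (G (1 - δ))
    have hd2 : HasDerivAt (fun v => G 1 + G (v - δ)) (γ (u - δ)) u := by
      have hc := ((hγderiv (u - δ) (by linarith)).comp u ((hasDerivAt_id u).sub_const δ)).const_add (G 1)
      simpa [Function.comp] using hc
    exact (hd2.congr_of_eventuallyEq h12).unique hd1
  -- Step 5a: extend to δ = a by continuity
  have key5 : ∀ t > (0:ℝ), γ (t - a) = γ t := by
    intro t ht
    have hca : ContinuousAt (fun δ => γ (t - δ)) a := by
      have h1 : ContinuousAt γ (t - a) := hγ.continuousAt (Ici_mem_nhds (by linarith))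
      exact h1.comp ((continuous_const.sub continuous_id).continuousAt)
    have h1 : Tendsto (fun δ => γ (t - δ)) (𝓝[<] a) (𝓝 (γ (t - a))) :=
      hca.tendsto.mono_left nhdsWithin_le_nhds
    have h2 : Tendsto (fun δ => γ (t - δ)) (𝓝[<] a) (𝓝 (γ t)) := by
      refine Tendsto.congr' ?_ tendsto_const_nhds
      filter_upwards [Ioo_mem_nhdsLT_of_mem (show a ∈ Ioc (0:ℝ) a from ⟨ha, le_rfl⟩)] with δ hδ
      exact (key4 δ hδ t ht).symm
    exact tendsto_nhds_unique h1 h2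
  have key6 : ∀ δ ∈ Ioc (0:ℝ) a, ∀ t > (0:ℝ), γ (t - δ) = γ t := by
    intro δ hδ t ht
    rcases eq_or_lt_of_le hδ.2 with h | h
    · rw [h]; exact key5 t ht
    · exact key4 δ ⟨hδ.1, h⟩ t ht
  -- Step 5b: extend to t = 0 by continuity
  have key7 : ∀ δ ∈ Ioc (0:ℝ) a, γ (0 - δ) = γ 0 := by
    intro δ hδ
    have h1 : Tendsto (fun t => γ (t - δ)) (𝓝[>] (0:ℝ)) (𝓝 (γ (-δ))) := by
      have hγw : ContinuousWithinAt γ (Ici (-a)) (-δ) := hγ _ (by simp only [mem_Ici]; linarith [hδ.2])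
      refine hγw.tendsto.comp ?_
      rw [tendsto_nhdsWithin_iff]
      constructor
      · have hb : Tendsto (fun t : ℝ => t - δ) (𝓝 (0:ℝ)) (𝓝 (0 - δ)) :=
          (continuous_id.sub continuous_const).tendsto 0
        rw [zero_sub] at hb
        exact hb.mono_left nhdsWithin_le_nhds
      · filter_upwards [self_mem_nhdsWithin] with t ht
        rw [mem_Ioi] at ht
        simp only [mem_Ici]
        linarith [hδ.2]
    have h2 : Tendsto (fun t => γ (t - δ)) (𝓝[>] (0:ℝ)) (𝓝 (γ 0)) := by
      have hγ0 : Tendsto γ (𝓝[>] (0:ℝ)) (𝓝 (γ 0)) := by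
        have hw := (hγ 0 (by simp only [mem_Ici]; linarith)).tendsto
        refine hw.mono_left (nhdsWithin_mono 0 ?_)
        intro t ht
        rw [mem_Ioi] at ht
        simp only [mem_Ici]
        linarith
      refine Tendsto.congr' ?_ hγ0
      filter_upwards [self_mem_nhdsWithin] with t ht
      rw [mem_Ioi] at ht
      exact (key6 δ hδ t ht).symm
    rw [zero_sub]
    exact tendsto_nhds_unique h1 h2
  have key8 : ∀ t ≥ (0:ℝ), ∀ δ ∈ Ioc (0:ℝ) a, γ (t - δ) = γ t := by
    intro t ht δ hδ
    rcases eq_or_lt_of_le ht with h | h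
    · rw [← h]; exact key7 δ hδ
    · exact key6 δ hδ t h
  -- final induction
  have main : ∀ n : ℕ, ∀ x : ℝ, -a ≤ x → x ≤ n * a → γ x = γ 0 := by
    intro n
    induction n with
    | zero =>
      intro x hx1 hx2
      simp only [Nat.cast_zero, zero_mul] at hx2
      rcases eq_or_lt_of_le hx2 with h | h
      · rw [h]
      · have h8 := key8 0 le_rfl (-x) ⟨by linarith, by linarith⟩
        simpa using h8
    | succ n ih =>
      intro x hx1 hx2
      by_cases h : x ≤ n * a
      · exact ih x hx1 h
      · push_neg at h
        have hna : (0:ℝ) ≤ n * a := by positivity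
        have hx0 : (0:ℝ) ≤ x := le_trans hna h.le
        have h1 : γ (x - a) = γ x := key8 x hx0 a ⟨ha, le_rfl⟩
        rw [← h1]
        refine ih (x - a) (by linarith) ?_
        push_cast at hx2
        linarith
  intro x hx y hy
  rw [mem_Ici] at hx hy
  obtain ⟨n, hn⟩ := exists_nat_ge (x / a)
  obtain ⟨m, hm⟩ := exists_nat_ge (y / a)
  rw [div_le_iff₀ ha] at hn hm
  rw [main n x hx hn, main m y hy hm]
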